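/- Let g, h be Schwartz functions on ℝ², A = diag(4,2), B = [[1,1],[0,1]]. Write g_{A^(-j)B^(-ℓ)}(x) = |det A|^j g(B^ℓ A^j x) and h_Q(x) = 2^(3i/2) h(B^m A^i x - n) for Q identified with (i,m,n), with x_Q = A^(-i) B^(-m) n and |Q| = 2^(-3i). Then for i ∈ {j-1, j, j+1} with i,j ≥ 0, |ℓ| ≤ 2^j, |m| ≤ 2^i, and every N > 2, there exists C_N > 0 such that |(g_{A^(-j)B^(-ℓ)} ∗ h_Q)(x)| ≤ C_N |Q|^(-1/2) (1 + 2^i |x - x_Q|)^(-N) for all x ∈ ℝ². -/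

import Mathlib

open MeasureTheory Metric Set Filter
noncomputable section

/-- `ℝ²` with the Euclidean norm. -/
abbrev V2 := EuclideanSpace ℝ (Fin 2)

/-- the vector `(a, b) ∈ ℝ²`. -/
def v2 (a b : ℝ) : V2 := (WithLp.equiv 2 (Fin 2 → ℝ)).symm ![a, b]

/-- The action of `B^ℓ A^j` on `ℝ²` for `A = diag(4,2)`, `B = [[1,1],[0,1]]`:
`x ↦ (2^(2j) x₁ + 2^j ℓ x₂, 2^j x₂)`. -/
def BA (j : ℕ) (ℓ : ℤ) (x : V2) : V2 :=
  v2 ((2:ℝ)^(2*j) * x 0 + (2:ℝ)^j * (ℓ:ℝ) * x 1) ((2:ℝ)^j * x 1)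

/-- The action of `A^(-j) B^(-ℓ)` on `ℝ²` (the inverse of `BA j ℓ`). -/
def invBA (j : ℕ) (ℓ : ℤ) (x : V2) : V2 :=
  v2 (((2:ℝ)^(2*j))⁻¹ * (x 0 - (ℓ:ℝ) * x 1)) (((2:ℝ)^j)⁻¹ * x 1)

/-- embedding of `ℤ²` into `ℝ²`. -/
def vi (k : ℤ × ℤ) : V2 := v2 (k.1 : ℝ) (k.2 : ℝ)

/-- `g_{A^(-j)B^(-ℓ)}(x) = |det A|^j g(B^ℓ A^j x)`, with `|det A| = 8`. -/
def dilA (g : V2 → ℂ) (j : ℕ) (ℓ : ℤ) (x : V2) : ℂ :=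
  ((8:ℝ)^j : ℝ) * g (BA j ℓ x)

/-- `h_Q(x) = 2^(3i/2) h(B^m A^i x - n)` for `Q = (i,m,n)`. -/
def shemel (h : V2 → ℂ) (i : ℕ) (m : ℤ) (n : ℤ × ℤ) (x : V2) : ℂ :=
  ((2:ℝ) ^ (3*(i:ℝ)/2) : ℝ) * h (BA i m x - vi n)

namespace Stmt4Aux

@[simp] lemma v2_apply0 (a b : ℝ) : v2 a b 0 = a := rfl
@[simp] lemma v2_apply1 (a b : ℝ) : v2 a b 1 = b := rfl

lemma coord_le_norm (y : V2) (k : Fin 2) : |y k| ≤ ‖y‖ := by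
  rw [EuclideanSpace.norm_eq]
  have h : |y k| = Real.sqrt (|y k|^2) := by
    rw [Real.sqrt_sq_eq_abs, abs_abs]
  rw [h]
  apply Real.sqrt_le_sqrt
  fin_cases k <;> simp [Fin.sum_univ_two, Real.norm_eq_abs, sq_abs] <;> positivity

lemma norm_le_coords (y : V2) : ‖y‖ ≤ |y 0| + |y 1| := by
  rw [EuclideanSpace.norm_eq]
  rw [show Real.sqrt _ = Real.sqrt (‖y 0‖^2 + ‖y 1‖^2) by rw [Fin.sum_univ_two]]
  have h : ‖y 0‖^2 + ‖y 1‖^2 ≤ (|y 0| + |y 1|)^2 := by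
    simp only [Real.norm_eq_abs]; nlinarith [abs_nonneg (y 0), abs_nonneg (y 1)]
  calc Real.sqrt (‖y 0‖^2 + ‖y 1‖^2) ≤ Real.sqrt ((|y 0| + |y 1|)^2) := Real.sqrt_le_sqrt h
    _ = |y 0| + |y 1| := Real.sqrt_sq (by positivity)

@[simp] lemma sub_apply (x y : V2) (k : Fin 2) : (x - y) k = x k - y k := rfl

lemma BA_sub (j : ℕ) (ℓ : ℤ) (x y : V2) : BA j ℓ (x - y) = BA j ℓ x - BA j ℓ y := by
  ext k; fin_cases k <;> simp [BA] <;> ring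

lemma BA_invBA (j : ℕ) (ℓ : ℤ) (y : V2) : BA j ℓ (invBA j ℓ y) = y := by
  have h1 : (2:ℝ)^j ≠ 0 := by positivity
  have h2 : (2:ℝ)^(2*j) ≠ 0 := by positivity
  ext k; fin_cases k <;> simp [BA, invBA] <;> field_simp <;> ring

def BAlin (j : ℕ) (ℓ : ℤ) : V2 →ₗ[ℝ] V2 where
  toFun := BA j ℓ
  map_add' x y := by ext k; fin_cases k <;> simp [BA] <;> ring
  map_smul' c x := by ext k; fin_cases k <;> simp [BA] <;> ring

lemma BAlin_det (j : ℕ) (ℓ : ℤ) : LinearMap.det (BAlin j ℓ) = 8^j := by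
  have h := LinearMap.det_toMatrix (PiLp.basisFun 2 ℝ (Fin 2)) (BAlin j ℓ)
  rw [← h, Matrix.det_fin_two]
  have e0 : (PiLp.basisFun 2 ℝ (Fin 2)) 0 = v2 1 0 := by
    rw [PiLp.basisFun_apply]; ext k; fin_cases k <;> simp [v2]
  have e1 : (PiLp.basisFun 2 ℝ (Fin 2)) 1 = v2 0 1 := by
    rw [PiLp.basisFun_apply]; ext k; fin_cases k <;> simp [v2]
  simp only [LinearMap.toMatrix_apply, PiLp.basisFun_repr, e0, e1]
  show (BA j ℓ (v2 1 0)) 0 * (BA j ℓ (v2 0 1)) 1 - (BA j ℓ (v2 0 1)) 0 * (BA j ℓ (v2 1 0)) 1 = _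
  simp [BA]
  rw [pow_mul]
  norm_num
  rw [← mul_pow]
  norm_num

lemma BAlin_cont (j : ℕ) (ℓ : ℤ) : Continuous (BAlin j ℓ) :=
  (BAlin j ℓ).continuous_of_finiteDimensional

lemma integrable_target : Integrable (fun s : V2 => (1 + ‖s‖) ^ (-(3:ℝ))) := by
  apply integrable_one_add_norm
  simp [finrank_euclideanSpace_fin]
  norm_num

lemma map_BA (j : ℕ) (ℓ : ℤ) :
    Measure.map (BAlin j ℓ) volume = ENNReal.ofReal ((8:ℝ)^j)⁻¹ • volume := by
  have h := Measure.map_linearMap_addHaar_eq_smul_addHaar (volume : Measure V2)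
    (f := BAlin j ℓ) (by rw [BAlin_det]; positivity)
  rw [h, BAlin_det]
  congr 1
  rw [abs_of_nonneg (by positivity)]

lemma integrable_BA (j : ℕ) (ℓ : ℤ) :
    Integrable (fun t : V2 => (1 + ‖BA j ℓ t‖) ^ (-(3:ℝ))) := by
  have hmeas : AEMeasurable (BAlin j ℓ) (volume : Measure V2) :=
    (BAlin_cont j ℓ).aemeasurable
  have hi : Integrable (fun s : V2 => (1 + ‖s‖) ^ (-(3:ℝ)))
      (Measure.map (BAlin j ℓ) volume) := by
    rw [map_BA]
    exact integrable_target.smul_measure (by simp)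
  exact (integrable_map_measure hi.aestronglyMeasurable hmeas).mp hi

lemma integral_BA (j : ℕ) (ℓ : ℤ) :
    ∫ t : V2, (1 + ‖BA j ℓ t‖) ^ (-(3:ℝ)) = ((8:ℝ)^j)⁻¹ * ∫ s : V2, (1 + ‖s‖) ^ (-(3:ℝ)) := by
  have hmeas : AEMeasurable (BAlin j ℓ) (volume : Measure V2) :=
    (BAlin_cont j ℓ).aemeasurable
  have hsm : AEStronglyMeasurable (fun s : V2 => (1 + ‖s‖) ^ (-(3:ℝ)))
      (Measure.map (BAlin j ℓ) volume) :=
    (Continuous.aestronglyMeasurable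
      ((continuous_const.add continuous_norm).rpow_const (fun x : V2 => Or.inl (by positivity : (1:ℝ) + ‖x‖ ≠ 0))))
  have h2 := MeasureTheory.integral_map hmeas hsm
  rw [map_BA, integral_smul_measure] at h2
  have h3 : (fun t : V2 => (1 + ‖BA j ℓ t‖) ^ (-(3:ℝ)))
      = fun t : V2 => (1 + ‖(BAlin j ℓ) t‖) ^ (-(3:ℝ)) := rfl
  rw [h3, ← h2]
  simp [ENNReal.toReal_ofReal (by positivity : (0:ℝ) ≤ ((8:ℝ)^j)⁻¹)]

lemma schwartz_decay (f : SchwartzMap V2 ℂ) (K : ℝ) (hK : 0 ≤ K) :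
    ∃ C > 0, ∀ y : V2, ‖f y‖ ≤ C * (1 + ‖y‖) ^ (-K) := by
  set k : ℕ := ⌈K⌉₊
  set C0 : ℝ := 2^k * (Finset.Iic (k,0)).sup (schwartzSeminormFamily ℝ V2 ℂ) f
  have hC0 : 0 ≤ C0 := by positivity
  refine ⟨C0 + 1, by positivity, fun y => ?_⟩
  have h1 : (0:ℝ) < 1 + ‖y‖ := by positivity
  have hb : (1 + ‖y‖)^k * ‖f y‖ ≤ C0 := by
    have h := SchwartzMap.one_add_le_sup_seminorm_apply (𝕜 := ℝ) (m := (k, 0))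
      (le_refl _) (le_refl _) f y
    rwa [norm_iteratedFDeriv_zero] at h
  have h2 : ‖f y‖ ≤ C0 * (1 + ‖y‖) ^ (-(k:ℝ)) := by
    rw [Real.rpow_neg h1.le, Real.rpow_natCast, mul_comm, ← div_eq_inv_mul]
    exact (le_div_iff₀ (pow_pos h1 k)).mpr (by linarith [hb])
  have h3 : (1 + ‖y‖) ^ (-(k:ℝ)) ≤ (1 + ‖y‖) ^ (-K) :=
    Real.rpow_le_rpow_of_exponent_le (le_add_of_nonneg_right (norm_nonneg y))
      (neg_le_neg (Nat.le_ceil K))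
  have h4 : (0:ℝ) < (1 + ‖y‖) ^ (-K) := Real.rpow_pos_of_pos h1 _
  nlinarith [mul_le_mul_of_nonneg_left h3 hC0]

lemma core_rpow (N S r W : ℝ) (hN : 0 < N) (hS : 0 ≤ S) (hr : 0 ≤ r) (hW : 0 ≤ W)
    (hkey : 1 + W ≤ 20*((1+r)*(1+S))) :
    (1+S)^(-(N+3)) * (1+r)^(-(N+3)) ≤ 20^N * ((1+W)^(-N) * (1+S)^(-(3:ℝ))) := by
  have hS1 : (0:ℝ) < 1+S := by linarith
  have hr1 : (0:ℝ) < 1+r := by linarith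
  have hW1 : (0:ℝ) < 1+W := by linarith
  have e1 : (1+S)^(-(N+3)) = (1+S)^(-N)*(1+S)^(-(3:ℝ)) := by
    rw [← Real.rpow_add hS1]; ring_nf
  have e2 : (1+r)^(-(N+3)) = (1+r)^(-N)*(1+r)^(-(3:ℝ)) := by
    rw [← Real.rpow_add hr1]; ring_nf
  have h3 : (1+r)^(-(3:ℝ)) ≤ 1 :=
    Real.rpow_le_one_of_one_le_of_nonpos (by linarith) (by norm_num)
  have h20 : ((20:ℝ)*((1+r)*(1+S)))^(-N) ≤ (1+W)^(-N) :=
    Real.rpow_le_rpow_of_nonpos hW1 hkey (by linarith)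
  have hexp : ((20:ℝ)*((1+r)*(1+S)))^(-N) = 20^(-N) * ((1+r)^(-N) * (1+S)^(-N)) := by
    rw [Real.mul_rpow (by norm_num) (by positivity), Real.mul_rpow hr1.le hS1.le]
  have h6 : (20:ℝ)^(-N) = ((20:ℝ)^N)⁻¹ := Real.rpow_neg (by norm_num) N
  have h7 : (0:ℝ) < (20:ℝ)^N := Real.rpow_pos_of_pos (by norm_num) N
  have h5 : (1+r)^(-N) * (1+S)^(-N) ≤ 20^N * (1+W)^(-N) := by
    calc (1+r)^(-N) * (1+S)^(-N) = 20^N * (20^(-N) * ((1+r)^(-N) * (1+S)^(-N))) := by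
          rw [h6]; field_simp
      _ = 20^N * ((20*((1+r)*(1+S)))^(-N)) := by rw [hexp]
      _ ≤ 20^N * (1+W)^(-N) := mul_le_mul_of_nonneg_left h20 h7.le
  have pS3 : (0:ℝ) < (1+S)^(-(3:ℝ)) := Real.rpow_pos_of_pos hS1 _
  have pSN : (0:ℝ) < (1+S)^(-N) := Real.rpow_pos_of_pos hS1 _
  have prN : (0:ℝ) < (1+r)^(-N) := Real.rpow_pos_of_pos hr1 _
  have pr3 : (0:ℝ) < (1+r)^(-(3:ℝ)) := Real.rpow_pos_of_pos hr1 _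
  rw [e1, e2]
  calc (1+S)^(-N)*(1+S)^(-(3:ℝ)) * ((1+r)^(-N)*(1+r)^(-(3:ℝ)))
      ≤ (1+S)^(-N)*(1+S)^(-(3:ℝ)) * ((1+r)^(-N)*1) := by
        apply mul_le_mul_of_nonneg_left (mul_le_mul_of_nonneg_left h3 prN.le) (by positivity)
    _ = ((1+r)^(-N) * (1+S)^(-N)) * (1+S)^(-(3:ℝ)) := by ring
    _ ≤ (20^N * (1+W)^(-N)) * (1+S)^(-(3:ℝ)) := mul_le_mul_of_nonneg_right h5 pS3.le
    _ = 20^N * ((1+W)^(-N) * (1+S)^(-(3:ℝ))) := by ring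

set_option maxHeartbeats 1000000 in
lemma geom_key (p q t1 t2 w0 w1 u0 u1 S r W mr lr : ℝ)
    (hp : 1 ≤ p) (hq : 1 ≤ q) (hpq : p ≤ 2*q) (hqp : q ≤ 2*p)
    (hm : |mr| ≤ p) (hl : |lr| ≤ q)
    (hS : 0 ≤ S) (hr : 0 ≤ r)
    (hs1 : |q^2*t1 + q*lr*t2| ≤ S) (hs2 : |q*t2| ≤ S)
    (hr0 : |u0 - (p^2*t1 + p*mr*t2)| ≤ r) (hr1 : |u1 - p*t2| ≤ r)
    (hu0 : u0 = p^2*w0 + p*mr*w1) (hu1 : u1 = p*w1)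
    (hW : W ≤ p*(|w0| + |w1|)) :
    1 + W ≤ 20*((1+r)*(1+S)) := by
  have hp0 : (0:ℝ) < p := by linarith
  have hq0 : (0:ℝ) < q := by linarith
  have hqt2 : q*|t2| ≤ S := by rw [← abs_of_pos hq0, ← abs_mul]; exact hs2
  have hpt2 : p*|t2| ≤ 2*S := by nlinarith [abs_nonneg t2]
  have hq2t1 : q^2*|t1| ≤ (1+q)*S := by
    have h1 : |q^2*t1| ≤ |q^2*t1 + q*lr*t2| + |q*lr*t2| := by
      calc |q^2*t1| = |(q^2*t1 + q*lr*t2) - q*lr*t2| := by ring_nf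
        _ ≤ |q^2*t1 + q*lr*t2| + |q*lr*t2| := abs_sub _ _
    have h2 : |q*lr*t2| ≤ q*S := by
      rw [abs_mul, abs_mul, abs_of_pos hq0]
      nlinarith [abs_nonneg t2, abs_nonneg lr]
    have h3 : |q^2*t1| = q^2*|t1| := by rw [abs_mul, abs_of_pos (by positivity : (0:ℝ) < q^2)]
    nlinarith
  have hp2t1 : p^2*|t1| ≤ 12*p*S := by
    have hp2 : p^2 ≤ 4*q^2 := by nlinarith
    have h1 := mul_le_mul_of_nonneg_right hp2 (abs_nonneg t1)
    have h2 := mul_le_mul_of_nonneg_right (show (1:ℝ)+q ≤ 3*p by linarith) hS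
    nlinarith
  have hd0 : |p^2*t1 + p*mr*t2| ≤ 14*p*S := by
    have h2 : |p*mr*t2| ≤ 2*p*S := by
      rw [abs_mul, abs_mul, abs_of_pos hp0]
      nlinarith [abs_nonneg t2, abs_nonneg mr]
    have h3 : |p^2*t1| = p^2*|t1| := by rw [abs_mul, abs_of_pos (by positivity : (0:ℝ) < p^2)]
    calc |p^2*t1 + p*mr*t2| ≤ |p^2*t1| + |p*mr*t2| := abs_add_le _ _
      _ ≤ 14*p*S := by nlinarith
  have hu0b : |u0| ≤ r + 14*p*S := by
    calc |u0| = |(u0 - (p^2*t1 + p*mr*t2)) + (p^2*t1 + p*mr*t2)| := by ring_nf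
      _ ≤ |u0 - (p^2*t1 + p*mr*t2)| + |p^2*t1 + p*mr*t2| := abs_add_le _ _
      _ ≤ r + 14*p*S := by linarith
  have hu1b : |u1| ≤ r + 2*S := by
    calc |u1| = |(u1 - p*t2) + p*t2| := by ring_nf
      _ ≤ |u1 - p*t2| + |p*t2| := abs_add_le _ _
      _ ≤ r + 2*S := by rw [abs_mul, abs_of_pos hp0]; linarith
  have hw1 : p*|w1| = |u1| := by rw [hu1, abs_mul, abs_of_pos hp0]
  have hw0 : p*|w0| ≤ 2*r + 16*S := by
    have h1 : p^2*|w0| = |p^2*w0| := by rw [abs_mul, abs_of_pos (by positivity : (0:ℝ) < p^2)]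
    have h2 : |p^2*w0| ≤ |u0| + |mr| * |u1| := by
      calc |p^2*w0| = |u0 - mr*u1| := by rw [hu0, hu1]; ring_nf
        _ ≤ |u0| + |mr*u1| := abs_sub _ _
        _ = |u0| + |mr| * |u1| := by rw [abs_mul]
    have h3 : p*(p*|w0|) ≤ p*(2*r + 16*S) := by
      have h4 : |mr| * |u1| ≤ p*(r+2*S) :=
        mul_le_mul hm hu1b (abs_nonneg u1) hp0.le
      have h5 : p*(p*|w0|) ≤ r + 14*p*S + p*(r+2*S) := by
        rw [show p*(p*|w0|) = p^2*|w0| by ring, h1]; linarith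
      have h6 : r ≤ p*r := le_mul_of_one_le_left hr hp
      have h7 : p*(r+2*S) = p*r + 2*(p*S) := by ring
      have h8 : p*(2*r+16*S) = 2*(p*r) + 16*(p*S) := by ring
      linarith
    exact le_of_mul_le_mul_left h3 hp0
  have e : p*(|w0| + |w1|) = p*|w0| + p*|w1| := by ring
  rw [e] at hW
  have hfin : 1 + W ≤ 1 + 3*r + 18*S := by linarith
  nlinarith [mul_nonneg hr hS]

end Stmt4Aux

open Stmt4Aux in
/-- for Schwartz `g, h`, neighbouring scales `i ∈ {j-1,j,j+1}` and `N > 2`,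
`|(g_{A^(-j)B^(-ℓ)} ∗ h_Q)(x)| ≤ C_N |Q|^(-1/2) (1+2^i|x-x_Q|)^(-N)`
where `|Q|^(-1/2) = 2^(3i/2)` and `x_Q = A^(-i)B^(-m) n`. -/
theorem stmt4 (g h : SchwartzMap V2 ℂ) (N : ℝ) (hN : N > 2) :
    ∃ C > 0, ∀ (j i : ℕ) (ℓ m : ℤ) (n : ℤ × ℤ),
      ((i:ℤ) = (j:ℤ) - 1 ∨ (i:ℤ) = (j:ℤ) ∨ (i:ℤ) = (j:ℤ) + 1) →
      |ℓ| ≤ 2^j → |m| ≤ 2^i →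
      ∀ x : V2,
        ‖convolution (dilA (fun y => g y) j ℓ) (shemel (fun y => h y) i m n)
            (ContinuousLinearMap.mul ℂ ℂ) volume x‖ ≤
          C * (2:ℝ) ^ (3*(i:ℝ)/2) * (1 + (2:ℝ)^i * ‖x - invBA i m (vi n)‖) ^ (-N) := by
  obtain ⟨Cg, hCg0, hCg⟩ := schwartz_decay g (N+3) (by linarith)
  obtain ⟨Ch, hCh0, hCh⟩ := schwartz_decay h (N+3) (by linarith)
  set I3 : ℝ := ∫ s : V2, (1 + ‖s‖) ^ (-(3:ℝ)) with hI3def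
  have hI3 : 0 ≤ I3 := integral_nonneg (fun s => Real.rpow_nonneg (by positivity) _)
  have h20N : (0:ℝ) < (20:ℝ)^N := Real.rpow_pos_of_pos (by norm_num) N
  refine ⟨Cg * Ch * (20:ℝ)^N * (I3 + 1), by positivity, ?_⟩
  intro j i ℓ m n hij hl hm x
  have hij1 : i ≤ j + 1 := by omega
  have hij2 : j ≤ i + 1 := by omega
  set p : ℝ := (2:ℝ)^i with hp_def
  set q : ℝ := (2:ℝ)^j with hq_def
  have hp1 : (1:ℝ) ≤ p := one_le_pow₀ (by norm_num : (1:ℝ) ≤ 2)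
  have hq1 : (1:ℝ) ≤ q := one_le_pow₀ (by norm_num : (1:ℝ) ≤ 2)
  have hpq : p ≤ 2*q := by
    calc p ≤ (2:ℝ)^(j+1) := pow_le_pow_right₀ (by norm_num) hij1
      _ = 2*q := by rw [pow_succ]; ring
  have hqp : q ≤ 2*p := by
    calc q ≤ (2:ℝ)^(i+1) := pow_le_pow_right₀ (by norm_num) hij2
      _ = 2*p := by rw [pow_succ]; ring
  have hmr : |(m:ℝ)| ≤ p := by
    rw [hp_def]; exact_mod_cast hm
  have hlr : |(ℓ:ℝ)| ≤ q := by
    rw [hq_def]; exact_mod_cast hl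
  set w : V2 := x - invBA i m (vi n) with hw_def
  set W : ℝ := p * ‖w‖ with hW_def
  have hW0 : 0 ≤ W := by positivity
  set D : ℝ := (2:ℝ) ^ (3*(i:ℝ)/2) with hD_def
  have hD0 : (0:ℝ) < D := Real.rpow_pos_of_pos (by norm_num) _
  have hWN : (0:ℝ) < (1 + W)^(-N) := Real.rpow_pos_of_pos (by linarith) _
  -- the equality u = BA i m w
  have hu_eq : BA i m x - vi n = BA i m w := by
    rw [hw_def, BA_sub, BA_invBA]
  -- pointwise bound
  have key : ∀ t : V2,
      ‖dilA (fun y => g y) j ℓ t * shemel (fun y => h y) i m n (x - t)‖ ≤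
        (Cg * Ch * (20:ℝ)^N * D * (1 + W)^(-N)) * ((8:ℝ)^j * (1 + ‖BA j ℓ t‖)^(-(3:ℝ))) := by
    intro t
    set S : ℝ := ‖BA j ℓ t‖ with hS_def
    set r : ℝ := ‖BA i m (x - t) - vi n‖ with hr_def
    have hS0 : 0 ≤ S := norm_nonneg _
    have hr0' : 0 ≤ r := norm_nonneg _
    have hkey : 1 + W ≤ 20*((1+r)*(1+S)) := by
      have q2 : (2:ℝ)^(2*j) = q^2 := by rw [hq_def, mul_comm, pow_mul]
      have p2 : (2:ℝ)^(2*i) = p^2 := by rw [hp_def, mul_comm, pow_mul]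
      have c0 : ∀ y : V2, (BA j ℓ y) 0 = q^2 * y 0 + q*(ℓ:ℝ)* y 1 := by
        intro y
        show (2:ℝ)^(2*j) * y 0 + (2:ℝ)^j*(ℓ:ℝ)* y 1 = _
        rw [q2, hq_def]
      have c1 : ∀ y : V2, (BA j ℓ y) 1 = q * y 1 := by
        intro y; show (2:ℝ)^j * y 1 = _; rw [hq_def]
      have d0 : ∀ y : V2, (BA i m y) 0 = p^2 * y 0 + p*(m:ℝ)* y 1 := by
        intro y
        show (2:ℝ)^(2*i) * y 0 + (2:ℝ)^i*(m:ℝ)* y 1 = _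
        rw [p2, hp_def]
      have d1 : ∀ y : V2, (BA i m y) 1 = p * y 1 := by
        intro y; show (2:ℝ)^i * y 1 = _; rw [hp_def]
      have hs1 : |q^2 * t 0 + q*(ℓ:ℝ)* t 1| ≤ S := by
        rw [← c0 t]; exact coord_le_norm (BA j ℓ t) 0
      have hs2 : |q * t 1| ≤ S := by
        rw [← c1 t]; exact coord_le_norm (BA j ℓ t) 1
      have hdiff : BA i m (x - t) - vi n = (BA i m x - vi n) - BA i m t := by
        rw [BA_sub]; abel
      have e0 : (BA i m (x - t) - vi n) 0
          = (BA i m x - vi n) 0 - (p^2 * t 0 + p*(m:ℝ)* t 1) := by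
        rw [hdiff, Stmt4Aux.sub_apply, d0 t]
      have e1 : (BA i m (x - t) - vi n) 1 = (BA i m x - vi n) 1 - p * t 1 := by
        rw [hdiff, Stmt4Aux.sub_apply, d1 t]
      have hr0 : |(BA i m x - vi n) 0 - (p^2 * t 0 + p*(m:ℝ)* t 1)| ≤ r := by
        rw [← e0]; exact coord_le_norm (BA i m (x - t) - vi n) 0
      have hr1 : |(BA i m x - vi n) 1 - p * t 1| ≤ r := by
        rw [← e1]; exact coord_le_norm (BA i m (x - t) - vi n) 1
      have hu0 : (BA i m x - vi n) 0 = p^2 * w 0 + p*(m:ℝ)* w 1 := by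
        rw [hu_eq, d0 w]
      have hu1 : (BA i m x - vi n) 1 = p * w 1 := by
        rw [hu_eq, d1 w]
      have hWle : W ≤ p * (|w 0| + |w 1|) :=
        mul_le_mul_of_nonneg_left (norm_le_coords w) (by positivity)
      exact geom_key p q (t 0) (t 1) (w 0) (w 1) _ _ S r W (m:ℝ) (ℓ:ℝ)
        hp1 hq1 hpq hqp hmr hlr hS0 hr0' hs1 hs2 hr0 hr1 hu0 hu1 hWle
    have hg : ‖g (BA j ℓ t)‖ ≤ Cg * (1+S)^(-(N+3)) := hCg _
    have hh : ‖h (BA i m (x - t) - vi n)‖ ≤ Ch * (1+r)^(-(N+3)) := hCh _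
    have hnorm : ‖dilA (fun y => g y) j ℓ t * shemel (fun y => h y) i m n (x - t)‖
        = (8:ℝ)^j * ‖g (BA j ℓ t)‖ * (D * ‖h (BA i m (x - t) - vi n)‖) := by
      rw [norm_mul]
      simp only [dilA, shemel, norm_mul, Complex.norm_real, Real.norm_eq_abs]
      rw [abs_of_nonneg (by positivity : (0:ℝ) ≤ (8:ℝ)^j), abs_of_nonneg hD0.le]
    rw [hnorm]
    have hcore := core_rpow N S r W (by linarith) hS0 hr0' hW0 hkey
    have step1 : (8:ℝ)^j * ‖g (BA j ℓ t)‖ * (D * ‖h (BA i m (x - t) - vi n)‖)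
        ≤ (8:ℝ)^j * (Cg * (1+S)^(-(N+3))) * (D * (Ch * (1+r)^(-(N+3)))) := by
      apply mul_le_mul
      · exact mul_le_mul_of_nonneg_left hg (by positivity)
      · exact mul_le_mul_of_nonneg_left hh hD0.le
      · positivity
      · positivity
    calc (8:ℝ)^j * ‖g (BA j ℓ t)‖ * (D * ‖h (BA i m (x - t) - vi n)‖)
        ≤ (8:ℝ)^j * (Cg * (1+S)^(-(N+3))) * (D * (Ch * (1+r)^(-(N+3)))) := step1
      _ = (Cg * Ch * D * (8:ℝ)^j) * ((1+S)^(-(N+3)) * (1+r)^(-(N+3))) := by ring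
      _ ≤ (Cg * Ch * D * (8:ℝ)^j) * ((20:ℝ)^N * ((1+W)^(-N) * (1+S)^(-(3:ℝ)))) := by
          apply mul_le_mul_of_nonneg_left hcore (by positivity)
      _ = (Cg * Ch * (20:ℝ)^N * D * (1 + W)^(-N)) * ((8:ℝ)^j * (1 + S)^(-(3:ℝ))) := by ring
  -- integrate
  set Cm : ℝ := Cg * Ch * (20:ℝ)^N * D * (1 + W)^(-N) with hCm_def
  have hCm0 : 0 ≤ Cm := by positivity
  have hint : Integrable (fun t : V2 => Cm * ((8:ℝ)^j * (1 + ‖BA j ℓ t‖)^(-(3:ℝ)))) :=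
    (((integrable_BA j ℓ).const_mul ((8:ℝ)^j)).const_mul Cm)
  have hconv : ‖convolution (dilA (fun y => g y) j ℓ) (shemel (fun y => h y) i m n)
      (ContinuousLinearMap.mul ℂ ℂ) volume x‖
      ≤ ∫ t : V2, Cm * ((8:ℝ)^j * (1 + ‖BA j ℓ t‖)^(-(3:ℝ))) := by
    rw [convolution_def]
    calc ‖∫ t : V2, (ContinuousLinearMap.mul ℂ ℂ) (dilA (fun y => g y) j ℓ t)
          (shemel (fun y => h y) i m n (x - t))‖
        ≤ ∫ t : V2, ‖(ContinuousLinearMap.mul ℂ ℂ) (dilA (fun y => g y) j ℓ t)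
          (shemel (fun y => h y) i m n (x - t))‖ := norm_integral_le_integral_norm _
      _ ≤ ∫ t : V2, Cm * ((8:ℝ)^j * (1 + ‖BA j ℓ t‖)^(-(3:ℝ))) := by
          apply integral_mono_of_nonneg (Filter.Eventually.of_forall fun t => norm_nonneg _)
            hint
          apply Filter.Eventually.of_forall
          intro t
          simpa using key t
  have hval : ∫ t : V2, Cm * ((8:ℝ)^j * (1 + ‖BA j ℓ t‖)^(-(3:ℝ))) = Cm * I3 := by
    rw [integral_const_mul, integral_const_mul, integral_BA]
    have : (8:ℝ)^j * (((8:ℝ)^j)⁻¹ * I3) = I3 := by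
      field_simp
    rw [this]
  rw [hval] at hconv
  refine hconv.trans ?_
  have hle : Cg * Ch * (20:ℝ)^N * I3 ≤ Cg * Ch * (20:ℝ)^N * (I3+1) :=
    mul_le_mul_of_nonneg_left (by linarith : I3 ≤ I3 + 1) (by positivity)
  calc Cm * I3 = (Cg * Ch * (20:ℝ)^N * I3) * D * (1 + W)^(-N) := by rw [hCm_def]; ring
    _ ≤ Cg * Ch * (20:ℝ)^N * (I3+1) * D * (1 + W)^(-N) :=
        mul_le_mul_of_nonneg_right (mul_le_mul_of_nonneg_right hle hD0.le) hWN.le
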